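/- Let H be a complex Hilbert space and T : H → H a power-bounded operator such that for every x ∈ H and y ∈ H the series Σ_{k≥0} ‖T^k (I-T)^{1/2} x‖² converges with Σ_{k≥0} ‖T^k (I-T)^{1/2} x‖² ≤ C²‖x‖² (square function estimate), and similarly for T*. If x₁ ∈ closure(Ran(I - T)) and y₁ ∈ closure(Ran(I* - T*)), then for all n ≥ 0: Σ_{k≥0} ⟨T^{n+k}(I-T)^{1/2} x₁, (T*)^k (I-T*)^{1/2} y₁⟩ = ⟨(I + T)^{-1} T^n x₁, y₁⟩, provided I + T is invertible on closure(Ran(I-T)). -/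

import Mathlib

open ContinuousLinearMap

/-- The core pairing identity in the loose dilation construction: if `T` is power
bounded on a Hilbert space, `S` is a commuting square root of `I - T` satisfying square
function estimates (and likewise on the adjoint side), and `I + T` is invertible on
`closure(Ran(I-T))` with inverse `W` there, then for `x₁ ∈ closure(Ran(I-T))`,
`y₁ ∈ closure(Ran(I-T*))` and all `n ≥ 0`,
`Σ_k ⟨T^{n+k}(I-T)^{1/2}x₁, (T*)^k(I-T*)^{1/2}y₁⟩ = ⟨(I+T)^{-1}T^n x₁, y₁⟩`. -/
theorem stmt10 {H : Type*} [NormedAddCommGroup H] [InnerProductSpace ℂ H]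
    [CompleteSpace H]
    (T S W : H →L[ℂ] H) (C : ℝ) (hC : 0 < C)
    (hpow : ∀ n : ℕ, ‖T ^ n‖ ≤ C)
    (hS : S * S = 1 - T) (hST : Commute S T)
    (hsq : ∀ x : H, Summable (fun k : ℕ => ‖(T ^ k * S) x‖ ^ 2) ∧
      (∑' k : ℕ, ‖(T ^ k * S) x‖ ^ 2) ≤ C ^ 2 * ‖x‖ ^ 2)
    (hsqStar : ∀ y : H, Summable (fun k : ℕ => ‖((adjoint T) ^ k * adjoint S) y‖ ^ 2) ∧
      (∑' k : ℕ, ‖((adjoint T) ^ k * adjoint S) y‖ ^ 2) ≤ C ^ 2 * ‖y‖ ^ 2)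
    (hWmem : ∀ x ∈ (LinearMap.range (((1 : H →L[ℂ] H) - T : H →L[ℂ] H) : H →ₗ[ℂ] H)).topologicalClosure,
      W x ∈ (LinearMap.range (((1 : H →L[ℂ] H) - T : H →L[ℂ] H) : H →ₗ[ℂ] H)).topologicalClosure)
    (hW1 : ∀ x ∈ (LinearMap.range (((1 : H →L[ℂ] H) - T : H →L[ℂ] H) : H →ₗ[ℂ] H)).topologicalClosure,
      W ((1 + T) x) = x)
    (hW2 : ∀ x ∈ (LinearMap.range (((1 : H →L[ℂ] H) - T : H →L[ℂ] H) : H →ₗ[ℂ] H)).topologicalClosure,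
      (1 + T) (W x) = x)
    (x₁ : H) (hx₁ : x₁ ∈ (LinearMap.range (((1 : H →L[ℂ] H) - T : H →L[ℂ] H) : H →ₗ[ℂ] H)).topologicalClosure)
    (y₁ : H)
    (hy₁ : y₁ ∈ (LinearMap.range ((((1 : H →L[ℂ] H) - adjoint T : H →L[ℂ] H) : H →ₗ[ℂ] H))).topologicalClosure) :
    ∀ n : ℕ,
      (∑' k : ℕ, (inner ℂ ((T ^ (n + k) * S) x₁) (((adjoint T) ^ k * adjoint S) y₁) : ℂ))
        = inner ℂ (W ((T ^ n) x₁)) y₁ := by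
  have hRle := (LinearMap.range (((1 : H →L[ℂ] H) - T : H →L[ℂ] H) : H →ₗ[ℂ] H)).le_topologicalClosure
  set R := (LinearMap.range (((1 : H →L[ℂ] H) - T : H →L[ℂ] H) : H →ₗ[ℂ] H)).topologicalClosure with hRdef
  -- T maps R to itself
  have hTmem : ∀ x ∈ R, T x ∈ R := by
    intro x hx
    have hmaps : Set.MapsTo T (LinearMap.range (((1 : H →L[ℂ] H) - T : H →L[ℂ] H) : H →ₗ[ℂ] H) : Set H)
        (LinearMap.range (((1 : H →L[ℂ] H) - T : H →L[ℂ] H) : H →ₗ[ℂ] H) : Set H) := by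
      rintro _ ⟨w, rfl⟩
      refine ⟨T w, ?_⟩
      simp [sub_apply, one_apply, map_sub]
    exact map_mem_closure T.continuous hx hmaps
  have hTpowmem : ∀ (m : ℕ), ∀ x ∈ R, (T ^ m) x ∈ R := by
    intro m
    induction m with
    | zero => intro x hx; simpa using hx
    | succ m ih =>
      intro x hx
      have h : (T ^ (m + 1)) x = T ((T ^ m) x) := by
        rw [pow_succ', ContinuousLinearMap.mul_apply]
      rw [h]
      exact hTmem _ (ih x hx)
  -- powers of T tend to zero on R
  have hzero : ∀ x ∈ R, Filter.Tendsto (fun N : ℕ => (T ^ N) x) Filter.atTop (nhds 0) := by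
    have key : ∀ v ∈ LinearMap.range (((1 : H →L[ℂ] H) - T : H →L[ℂ] H) : H →ₗ[ℂ] H),
        Filter.Tendsto (fun N : ℕ => (T ^ N) v) Filter.atTop (nhds 0) := by
      rintro _ ⟨w, rfl⟩
      have h1 : ((1 : H →L[ℂ] H) - T) w = S (S w) := by
        rw [← hS]; rfl
      have hsumm := (hsq (S w)).1
      have hsq0 : Filter.Tendsto (fun k : ℕ => ‖(T ^ k * S) (S w)‖ ^ 2)
          Filter.atTop (nhds 0) := hsumm.tendsto_atTop_zero
      have hn0 : Filter.Tendsto (fun k : ℕ => ‖(T ^ k * S) (S w)‖) Filter.atTop (nhds 0) := by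
        have h := hsq0.sqrt
        rw [Real.sqrt_zero] at h
        refine h.congr fun k => ?_
        rw [Real.sqrt_sq (norm_nonneg _)]
      rw [tendsto_zero_iff_norm_tendsto_zero]
      refine hn0.congr fun k => ?_
      rw [ContinuousLinearMap.coe_coe, h1]; rfl
    intro x hx
    rw [NormedAddCommGroup.tendsto_nhds_zero]
    intro ε hε
    have hxc : x ∈ closure ((LinearMap.range (((1 : H →L[ℂ] H) - T : H →L[ℂ] H) : H →ₗ[ℂ] H) : Submodule ℂ H) : Set H) := hx
    obtain ⟨v, hv, hvx⟩ := Metric.mem_closure_iff.mp hxc (ε / (2 * (C + 1)))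
      (by positivity)
    have hv0 := key v hv
    rw [NormedAddCommGroup.tendsto_nhds_zero] at hv0
    filter_upwards [hv0 (ε / 2) (by positivity)] with N hN
    have hxv : ‖x - v‖ < ε / (2 * (C + 1)) := by
      rw [← dist_eq_norm]; exact hvx
    have h1 : (T ^ N) x = (T ^ N) v + (T ^ N) (x - v) := by
      rw [map_sub]; abel
    have h2 : ‖(T ^ N) (x - v)‖ ≤ C * ‖x - v‖ := by
      calc ‖(T ^ N) (x - v)‖ ≤ ‖T ^ N‖ * ‖x - v‖ := (T ^ N).le_opNorm _
        _ ≤ C * ‖x - v‖ := mul_le_mul_of_nonneg_right (hpow N) (norm_nonneg _)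
    have h3 : C * (ε / (2 * (C + 1))) ≤ ε / 2 := by
      rw [mul_div_assoc', div_le_div_iff₀ (by positivity) (by norm_num)]
      nlinarith
    calc ‖(T ^ N) x‖ ≤ ‖(T ^ N) v‖ + ‖(T ^ N) (x - v)‖ := by
          rw [h1]; exact norm_add_le _ _
      _ < ε / 2 + ε / 2 := by
          have h4 : C * ‖x - v‖ ≤ C * (ε / (2 * (C + 1))) :=
            mul_le_mul_of_nonneg_left hxv.le hC.le
          have := le_trans h2 (le_trans h4 h3)
          linarith
      _ = ε := by ring
  intro n
  set x : H := (T ^ n) x₁ with hxdef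
  have hx : x ∈ R := hTpowmem n x₁ hx₁
  have hx2 : ∀ m : ℕ, (T ^ (n + m)) x₁ = (T ^ m) x := by
    intro m
    rw [hxdef, ← ContinuousLinearMap.mul_apply, ← pow_add, add_comm m n]
  -- operator identity for the terms
  have hop : ∀ k : ℕ, (S * T ^ k) * (T ^ (n + k) * S) = T ^ (n + 2 * k) - T ^ (n + 2 * k + 1) := by
    intro k
    have he : k + (n + k) = n + 2 * k := by ring
    calc (S * T ^ k) * (T ^ (n + k) * S)
        = S * (T ^ k * T ^ (n + k)) * S := by simp only [mul_assoc]
      _ = S * T ^ (n + 2 * k) * S := by rw [← pow_add, he]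
      _ = T ^ (n + 2 * k) * S * S := by rw [(hST.pow_right (n + 2 * k)).eq]
      _ = T ^ (n + 2 * k) * (S * S) := by rw [mul_assoc]
      _ = T ^ (n + 2 * k) * (1 - T) := by rw [hS]
      _ = T ^ (n + 2 * k) - T ^ (n + 2 * k + 1) := by rw [mul_sub, mul_one, ← pow_succ]
  have hterm : ∀ k : ℕ,
      (inner ℂ ((T ^ (n + k) * S) x₁) (((adjoint T) ^ k * adjoint S) y₁) : ℂ)
        = inner ℂ ((T ^ (2 * k)) x - (T ^ (2 * k + 1)) x) y₁ := by
    intro k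
    have hadj : (adjoint T) ^ k * adjoint S = adjoint (S * T ^ k) := by
      rw [← star_eq_adjoint, ← star_eq_adjoint, ← star_eq_adjoint, ← star_pow, ← star_mul]
    rw [hadj, adjoint_inner_right,
      show (S * T ^ k) ((T ^ (n + k) * S) x₁) = ((S * T ^ k) * (T ^ (n + k) * S)) x₁ from rfl,
      hop k, sub_apply, hx2 (2 * k), show n + 2 * k + 1 = n + (2 * k + 1) from by ring,
      hx2 (2 * k + 1)]
  -- summability
  have hsumA : Summable (fun k : ℕ => ‖(T ^ (n + k) * S) x₁‖ ^ 2) := by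
    exact (hsq x₁).1.comp_injective (add_right_injective n)
  have hsumB := (hsqStar y₁).1
  have hsum : Summable (fun k : ℕ =>
      (inner ℂ ((T ^ (n + k) * S) x₁) (((adjoint T) ^ k * adjoint S) y₁) : ℂ)) := by
    refine Summable.of_norm_bounded
      (g := fun k => (‖(T ^ (n + k) * S) x₁‖ ^ 2 + ‖((adjoint T) ^ k * adjoint S) y₁‖ ^ 2) / 2)
      (by exact (hsumA.add hsumB).div_const 2) (fun k => ?_)
    have h1 : ‖(inner ℂ ((T ^ (n + k) * S) x₁) (((adjoint T) ^ k * adjoint S) y₁) : ℂ)‖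
        ≤ ‖(T ^ (n + k) * S) x₁‖ * ‖((adjoint T) ^ k * adjoint S) y₁‖ :=
      norm_inner_le_norm _ _
    nlinarith [sq_nonneg (‖(T ^ (n + k) * S) x₁‖ - ‖((adjoint T) ^ k * adjoint S) y₁‖),
      norm_nonneg ((T ^ (n + k) * S) x₁), norm_nonneg (((adjoint T) ^ k * adjoint S) y₁)]
  -- partial sums
  set u : ℕ → H := fun N => ∑ k ∈ Finset.range N, ((T ^ (2 * k)) x - (T ^ (2 * k + 1)) x)
    with hudef
  have humem : ∀ N, u N ∈ R := by
    intro N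
    refine Submodule.sum_mem _ fun k _ => hRle ?_
    refine ⟨(T ^ (2 * k)) x, ?_⟩
    rw [ContinuousLinearMap.coe_coe, sub_apply, ContinuousLinearMap.one_apply]
    congr 1
    rw [pow_succ', ContinuousLinearMap.mul_apply]
  have hu2 : ∀ N, ((1 + T) : H →L[ℂ] H) (u N) = x - (T ^ (2 * N)) x := by
    intro N
    have hterm2 : ∀ k : ℕ, ((1 + T) : H →L[ℂ] H) ((T ^ (2 * k)) x - (T ^ (2 * k + 1)) x)
        = (T ^ (2 * k)) x - (T ^ (2 * (k + 1))) x := by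
      intro k
      have e1 : (T ^ (2 * k + 1)) x = T ((T ^ (2 * k)) x) := by rw [pow_succ', ContinuousLinearMap.mul_apply]
      have e2 : (T ^ (2 * (k + 1))) x = T ((T ^ (2 * k + 1)) x) := by
        rw [show 2 * (k + 1) = (2 * k + 1) + 1 from by ring, pow_succ', ContinuousLinearMap.mul_apply]
      rw [map_sub, add_apply, add_apply, ContinuousLinearMap.one_apply, ContinuousLinearMap.one_apply, e2, e1]
      abel
    rw [hudef, map_sum, Finset.sum_congr rfl fun k _ => hterm2 k,
      Finset.sum_range_sub' (fun k => (T ^ (2 * k)) x) N]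
    simp
  have huW : ∀ N, u N = W x - W ((T ^ (2 * N)) x) := by
    intro N
    have := hW1 (u N) (humem N)
    rw [hu2 N, map_sub] at this
    exact this.symm
  -- partial sum formula
  have heq : ∀ N : ℕ, (∑ k ∈ Finset.range N,
      (inner ℂ ((T ^ (n + k) * S) x₁) (((adjoint T) ^ k * adjoint S) y₁) : ℂ))
      = (inner ℂ (W x) y₁ : ℂ) - inner ℂ (W ((T ^ (2 * N)) x)) y₁ := by
    intro N
    rw [Finset.sum_congr rfl fun k _ => hterm k, ← sum_inner]
    have h5 : (∑ k ∈ Finset.range N, ((T ^ (2 * k)) x - (T ^ (2 * k + 1)) x))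
        = W x - W ((T ^ (2 * N)) x) := huW N
    rw [h5, inner_sub_left]
  -- limits
  have hps := hsum.hasSum.tendsto_sum_nat
  have h2N : Filter.Tendsto (fun N : ℕ => (T ^ (2 * N)) x) Filter.atTop (nhds 0) := by
    refine (hzero x hx).comp ?_
    exact Filter.tendsto_atTop_atTop.mpr fun b => ⟨b, fun a ha => by omega⟩
  have hinner0 : Filter.Tendsto
      (fun N : ℕ => (inner ℂ (W ((T ^ (2 * N)) x)) y₁ : ℂ)) Filter.atTop (nhds 0) := by
    have hWc : Filter.Tendsto (fun N : ℕ => W ((T ^ (2 * N)) x)) Filter.atTop (nhds (W 0)) :=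
      (W.continuous.tendsto 0).comp h2N
    have := Filter.Tendsto.inner (𝕜 := ℂ) hWc (tendsto_const_nhds (x := y₁) (f := Filter.atTop))
    simpa using this
  have hlim2 : Filter.Tendsto (fun N : ℕ => ∑ k ∈ Finset.range N,
      (inner ℂ ((T ^ (n + k) * S) x₁) (((adjoint T) ^ k * adjoint S) y₁) : ℂ))
      Filter.atTop (nhds (inner ℂ (W x) y₁)) := by
    have h := tendsto_const_nhds (x := (inner ℂ (W x) y₁ : ℂ)) (f := Filter.atTop (α := ℕ))
    have := h.sub hinner0
    rw [sub_zero] at this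
    exact this.congr fun N => (heq N).symm
  exact tendsto_nhds_unique hps hlim2
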